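/- Let P_k(t) = (t+y_1)(t+y_2)···(t+y_k), and for 1 ≤ s ≤ m and 1 ≤ k ≤ n let Q_{s,k}(t) be the unique polynomial of degree less than k in t congruent to ∏_{j=s}^{m} 1/(x_j − t) modulo P_k(t) (the inverse being taken in the quotient ring R[t]/(P_k(t)) where R is the field of rational functions in the x's and y's). Then the coefficient of t^{k−1} in Q_{s,k}(t) equals F_{s,k}, the weighted sum over Up-Right lattice paths from (m,1) to (s,k) of the product of 1/(x_i+y_j) over visited cells. -/

import Mathlib

open Finset

noncomputable section

/-- The field of rational functions over `ℚ` in variables `x_1, x_2, …` and `y_1, y_2, …`. -/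
abbrev K : Type := FractionRing (MvPolynomial (ℕ ⊕ ℕ) ℚ)

/-- The variable `x_i` as an element of `K`. -/
def X (i : ℕ) : K := algebraMap (MvPolynomial (ℕ ⊕ ℕ) ℚ) K (MvPolynomial.X (Sum.inl i))

/-- The variable `y_j` as an element of `K`. -/
def Y (j : ℕ) : K := algebraMap (MvPolynomial (ℕ ⊕ ℕ) ℚ) K (MvPolynomial.X (Sum.inr j))

/-- A step of an Up-Right lattice path: `Up` decreases the first (row) coordinate by one,
`Right` increases the second (column) coordinate by one. -/
def Step (c d : ℕ × ℕ) : Prop :=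
  (d.1 + 1 = c.1 ∧ d.2 = c.2) ∨ (d.1 = c.1 ∧ d.2 = c.2 + 1)

/-- `p` is an Up-Right lattice path from cell `A` to cell `B` (listed as its sequence of
visited cells, starting at `A` and ending at `B`). -/
def IsPath (A B : ℕ × ℕ) (p : List (ℕ × ℕ)) : Prop :=
  p.Chain' Step ∧ p.head? = some A ∧ p.getLast? = some B

/-- All cells of `p` lie in the grid `{1,…,m} × {1,…,n}`. -/
def InGrid (m n : ℕ) (p : List (ℕ × ℕ)) : Prop :=
  ∀ c ∈ p, 1 ≤ c.1 ∧ c.1 ≤ m ∧ 1 ≤ c.2 ∧ c.2 ≤ n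

/-- The weight of a path: the product of `1/(x_i + y_j)` over all visited cells `(i,j)`. -/
def pathWeight (x y : ℕ → K) (p : List (ℕ × ℕ)) : K :=
  (p.map fun c => (x c.1 + y c.2)⁻¹).prod

/-- The single-path partition function: the sum of weights of all Up-Right lattice paths
from `A` to `B` inside the grid `{1,…,m} × {1,…,n}`. -/
def F1 (m n : ℕ) (x y : ℕ → K) (A B : ℕ × ℕ) : K :=
  ∑ᶠ p : {p : List (ℕ × ℕ) // IsPath A B p ∧ InGrid m n p}, pathWeight x y p.1

/-- `γ` is a `k`-tuple of pairwise vertex-disjoint Up-Right lattice paths `γ i : A i → B i`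
inside the grid `{1,…,m} × {1,…,n}`. -/
def IsTuple (m n k : ℕ) (A B : Fin k → ℕ × ℕ) (γ : Fin k → List (ℕ × ℕ)) : Prop :=
  (∀ i, IsPath (A i) (B i) (γ i) ∧ InGrid m n (γ i)) ∧
  (∀ i j, i ≠ j → ∀ c ∈ γ i, c ∉ γ j)

/-- The multi-path partition function: the sum, over all `k`-tuples of pairwise disjoint
Up-Right lattice paths `γ i : A i → B i` in the grid `{1,…,m} × {1,…,n}`, of the product
of `1/(x_i + y_j)` over all visited cells. -/
def Ftuple (m n k : ℕ) (x y : ℕ → K) (A B : Fin k → ℕ × ℕ) : K :=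
  ∑ᶠ γ : {γ : Fin k → List (ℕ × ℕ) // IsTuple m n k A B γ}, ∏ i, pathWeight x y (γ.1 i)

def pathsSet (m n : ℕ) (A B : ℕ × ℕ) : Set (List (ℕ × ℕ)) :=
  {p | IsPath A B p ∧ InGrid m n p}

theorem phi_len : ∀ (p : List (ℕ × ℕ)), p.Chain' Step → ∀ a b, p.head? = some a →
    p.getLast? = some b → (a.2 : ℤ) - (a.1 : ℤ) + p.length = (b.2 : ℤ) - (b.1 : ℤ) + 1 := by
  intro p
  induction p with
  | nil => intro _ a b ha _; simp at ha
  | cons c t ih =>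
    intro hch a b ha hb
    have hc : c = a := by simpa using ha
    subst hc
    cases t with
    | nil =>
      simp only [List.getLast?_singleton, Option.some.injEq] at hb
      subst hb; simp
    | cons d t' =>
      have hst : Step c d := (List.isChain_cons_cons.mp hch).1
      have := ih (List.isChain_cons_cons.mp hch).2 d b rfl (by rw [← hb]; simp)
      have hstep : (d.2 : ℤ) - d.1 = (c.2 : ℤ) - c.1 + 1 := by
        rcases hst with ⟨h1, h2⟩ | ⟨h1, h2⟩ <;> omega
      simp only [List.length_cons] at this ⊢
      push_cast at this ⊢
      omega

theorem pathsSet_empty_of_not_grid {m n : ℕ} {A B : ℕ × ℕ}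
    (hB : ¬(1 ≤ B.1 ∧ B.1 ≤ m ∧ 1 ≤ B.2 ∧ B.2 ≤ n)) : pathsSet m n A B = ∅ := by
  ext p
  simp only [pathsSet, Set.mem_setOf_eq, Set.mem_empty_iff_false, iff_false]
  rintro ⟨⟨-, -, hlast⟩, hgrid⟩
  exact hB (hgrid B (List.mem_of_getLast? hlast))

theorem pathsSet_self {m n : ℕ} {A : ℕ × ℕ}
    (hA : 1 ≤ A.1 ∧ A.1 ≤ m ∧ 1 ≤ A.2 ∧ A.2 ≤ n) : pathsSet m n A A = {[A]} := by
  ext p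
  simp only [pathsSet, Set.mem_setOf_eq, Set.mem_singleton_iff]
  constructor
  · rintro ⟨⟨hch, hhead, hlast⟩, -⟩
    have hlen := phi_len p hch A A hhead hlast
    have hlen1 : p.length = 1 := by omega
    match p, hlen1 with
    | [c], _ => simpa using hhead
  · rintro rfl
    refine ⟨⟨List.isChain_singleton _, rfl, rfl⟩, ?_⟩
    intro c hc
    simp only [List.mem_singleton] at hc
    subst hc; exact hA

/-- decomposition of a path ending at `B ≠ A`. -/
theorem pathsSet_decomp {m n : ℕ} {A B : ℕ × ℕ} (hAB : B ≠ A)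
    (hB : 1 ≤ B.1 ∧ B.1 ≤ m ∧ 1 ≤ B.2 ∧ B.2 ≤ n) :
    pathsSet m n A B = (fun q => q ++ [B]) '' pathsSet m n A (B.1 + 1, B.2) ∪
      (fun q => q ++ [B]) '' pathsSet m n A (B.1, B.2 - 1) := by
  ext p
  constructor
  · rintro ⟨⟨hch, hhead, hlast⟩, hgrid⟩
    have hpne : p ≠ [] := by rintro rfl; simp at hhead
    have hgl : p.getLast hpne = B := by
      rwa [List.getLast?_eq_getLast hpne, Option.some.injEq] at hlast
    have hdec : p.dropLast ++ [B] = p := by rw [← hgl]; exact List.dropLast_append_getLast hpne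
    have hqne : p.dropLast ≠ [] := by
      intro h0
      have : p = [B] := by rw [← hdec, h0]; rfl
      subst this
      simp only [List.head?_cons, Option.some.injEq] at hhead
      exact hAB hhead
    have hch2 : p.dropLast.Chain' Step ∧ ∀ x ∈ p.dropLast.getLast?, ∀ y ∈ ([B] : List (ℕ × ℕ)).head?, Step x y := by
      have : List.IsChain Step p := hch
      rw [← hdec, List.isChain_append] at this
      exact ⟨this.1, this.2.2⟩
    obtain ⟨C, hCmem⟩ : ∃ C, p.dropLast.getLast? = some C := by
      cases h : p.dropLast.getLast? with
      | none => exact absurd (List.getLast?_eq_none_iff.mp h) hqne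
      | some c => exact ⟨c, rfl⟩
    have hstep : Step C B := hch2.2 C (by rw [hCmem]; rfl) B rfl
    have hheadq : p.dropLast.head? = some A := by
      rw [← hdec] at hhead
      rwa [List.head?_append_of_ne_nil _ hqne] at hhead
    have hgridq : InGrid m n p.dropLast := by
      intro c hc
      exact hgrid c (by rw [← hdec]; exact List.mem_append_left _ hc)
    have hq : IsPath A C p.dropLast ∧ InGrid m n p.dropLast := ⟨⟨hch2.1, hheadq, hCmem⟩, hgridq⟩
    rcases hstep with ⟨h1, h2⟩ | ⟨h1, h2⟩
    · left
      refine ⟨p.dropLast, ?_, hdec⟩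
      have : C = (B.1 + 1, B.2) := by
        cases C; cases B; simp_all
      rwa [← this]
    · right
      refine ⟨p.dropLast, ?_, hdec⟩
      have : C = (B.1, B.2 - 1) := by
        cases C; cases B; simp_all
      rwa [← this]
  · rintro (⟨q, ⟨⟨hch, hhead, hlast⟩, hgrid⟩, rfl⟩ | ⟨q, ⟨⟨hch, hhead, hlast⟩, hgrid⟩, rfl⟩) <;>
    · have hqne : q ≠ [] := by rintro rfl; simp at hhead
      refine ⟨⟨?_, ?_, ?_⟩, ?_⟩
      · change List.IsChain Step (q ++ [B])
        rw [List.isChain_append]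
        refine ⟨hch, List.isChain_singleton _, ?_⟩
        intro x hx y hy
        rw [hlast, Option.mem_def, Option.some.injEq] at hx
        simp only [List.head?_cons, Option.mem_def, Option.some.injEq] at hy
        subst hx; subst hy
        first
        | exact Or.inl ⟨rfl, rfl⟩
        | exact Or.inr ⟨rfl, by simp; omega⟩
      · rwa [List.head?_append_of_ne_nil _ hqne]
      · exact List.getLast?_concat
      · intro c hc
        rcases List.mem_append.mp hc with h | h
        · exact hgrid c h
        · simp only [List.mem_singleton] at h; subst h; exact hB

theorem pathsSet_finite (m n : ℕ) : ∀ (d : ℕ) (A B : ℕ × ℕ),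
    B.2 + A.1 ≤ A.2 + B.1 + d → (pathsSet m n A B).Finite := by
  intro d
  induction d with
  | zero =>
    intro A B hle
    apply Set.Finite.subset (Set.finite_singleton [A])
    rintro p ⟨⟨hch, hhead, hlast⟩, -⟩
    have hlen := phi_len p hch A B hhead hlast
    have hpos : 1 ≤ p.length := List.length_pos_iff.mpr (by rintro rfl; simp at hhead)
    have h1 : p.length = 1 := by omega
    match p, h1 with
    | [c], _ =>
      have : c = A := by simpa using hhead
      simp [this]
  | succ d ih =>
    intro A B hle
    by_cases hB : 1 ≤ B.1 ∧ B.1 ≤ m ∧ 1 ≤ B.2 ∧ B.2 ≤ n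
    · obtain ⟨hB1, hB2, hB3, hB4⟩ := hB
      have h1 : (pathsSet m n A (B.1 + 1, B.2)).Finite :=
        ih A (B.1 + 1, B.2) (show B.2 + A.1 ≤ A.2 + (B.1 + 1) + d by omega)
      have h2 : (pathsSet m n A (B.1, B.2 - 1)).Finite :=
        ih A (B.1, B.2 - 1) (show B.2 - 1 + A.1 ≤ A.2 + B.1 + d by omega)
      have hB : 1 ≤ B.1 ∧ B.1 ≤ m ∧ 1 ≤ B.2 ∧ B.2 ≤ n := ⟨hB1, hB2, hB3, hB4⟩
      by_cases hAB : B = A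
      · subst hAB; rw [pathsSet_self hB]; exact Set.finite_singleton _
      · rw [pathsSet_decomp hAB hB]
        exact (h1.image _).union (h2.image _)
    · rw [pathsSet_empty_of_not_grid hB]; exact Set.finite_empty

theorem pathsSet_finite' (m n : ℕ) (A B : ℕ × ℕ) : (pathsSet m n A B).Finite :=
  pathsSet_finite m n (B.2 + A.1) A B (by omega)

theorem F1_eq (m n : ℕ) (x y : ℕ → K) (A B : ℕ × ℕ) :
    F1 m n x y A B = ∑ᶠ p ∈ pathsSet m n A B, pathWeight x y p :=
  finsum_subtype_eq_finsum_cond _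

theorem F1_empty (m n : ℕ) (x y : ℕ → K) (A B : ℕ × ℕ)
    (hB : ¬(1 ≤ B.1 ∧ B.1 ≤ m ∧ 1 ≤ B.2 ∧ B.2 ≤ n)) : F1 m n x y A B = 0 := by
  rw [F1_eq, pathsSet_empty_of_not_grid hB, finsum_mem_empty]

theorem F1_self (m n : ℕ) (x y : ℕ → K) (A : ℕ × ℕ)
    (hA : 1 ≤ A.1 ∧ A.1 ≤ m ∧ 1 ≤ A.2 ∧ A.2 ≤ n) :
    F1 m n x y A A = (x A.1 + y A.2)⁻¹ := by
  rw [F1_eq, pathsSet_self hA, finsum_mem_singleton]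
  simp [pathWeight]

theorem F1_rec (m n : ℕ) (x y : ℕ → K) (A B : ℕ × ℕ) (hAB : B ≠ A)
    (hB : 1 ≤ B.1 ∧ B.1 ≤ m ∧ 1 ≤ B.2 ∧ B.2 ≤ n) :
    F1 m n x y A B =
      (x B.1 + y B.2)⁻¹ * (F1 m n x y A (B.1 + 1, B.2) + F1 m n x y A (B.1, B.2 - 1)) := by
  have hf1 := pathsSet_finite' m n A (B.1 + 1, B.2)
  have hf2 := pathsSet_finite' m n A (B.1, B.2 - 1)
  have hinj : Function.Injective (fun q : List (ℕ × ℕ) => q ++ [B]) :=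
    List.append_left_injective _
  have hdisj : Disjoint ((fun q => q ++ [B]) '' pathsSet m n A (B.1 + 1, B.2))
      ((fun q => q ++ [B]) '' pathsSet m n A (B.1, B.2 - 1)) := by
    rw [Set.disjoint_left]
    rintro p ⟨q1, ⟨⟨-, -, hl1⟩, -⟩, rfl⟩ ⟨q2, ⟨⟨-, -, hl2⟩, -⟩, heq⟩
    have hq : q2 = q1 := hinj heq
    subst hq
    rw [hl1] at hl2
    simp at hl2
  have key : ∀ (C : ℕ × ℕ), (pathsSet m n A C).Finite →
      (∑ᶠ q ∈ pathsSet m n A C, pathWeight x y (q ++ [B]))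
        = F1 m n x y A C * (x B.1 + y B.2)⁻¹ := by
    intro C hf
    rw [F1_eq, finsum_mem_eq_finite_toFinset_sum _ hf, finsum_mem_eq_finite_toFinset_sum _ hf,
      Finset.sum_mul]
    refine Finset.sum_congr rfl fun q _ => ?_
    simp [pathWeight]
  rw [F1_eq, pathsSet_decomp hAB hB,
    finsum_mem_union hdisj (hf1.image _) (hf2.image _),
    finsum_mem_image (hinj.injOn), finsum_mem_image (hinj.injOn),
    key _ hf1, key _ hf2]
  ring

theorem lagrange_coeff {F : Type*} [Field F] {ι : Type*} [DecidableEq ι] (s : Finset ι)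
    (v : ι → F) (hvs : Set.InjOn v s) (f : Polynomial F) (hf : f.degree < (#s : ℕ)) :
    f.coeff (#s - 1) = ∑ i ∈ s, f.eval (v i) * ∏ j ∈ s.erase i, (v i - v j)⁻¹ := by
  conv_lhs => rw [Lagrange.eq_interpolate hvs hf]
  rw [Lagrange.interpolate_apply, Polynomial.finset_sum_coeff]
  refine Finset.sum_congr rfl fun i hi => ?_
  have hbasis : Lagrange.basis s v i =
      Polynomial.C (∏ j ∈ s.erase i, (v i - v j)⁻¹) *
        ∏ j ∈ s.erase i, (Polynomial.X - Polynomial.C (v j)) := by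
    rw [Lagrange.basis]
    simp_rw [Lagrange.basisDivisor]
    rw [Finset.prod_mul_distrib, map_prod]
  have hmonic : (∏ j ∈ s.erase i, (Polynomial.X - Polynomial.C (v j))).Monic :=
    Polynomial.monic_prod_of_monic _ _ fun j _ => Polynomial.monic_X_sub_C _
  have hnd : (∏ j ∈ s.erase i, (Polynomial.X - Polynomial.C (v j))).natDegree = #s - 1 := by
    rw [Polynomial.natDegree_prod_of_monic _ _ fun j _ => Polynomial.monic_X_sub_C _]
    simp [Finset.card_erase_of_mem hi]
  rw [hbasis, ← mul_assoc, ← Polynomial.C_mul, Polynomial.coeff_C_mul, ← hnd,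
    hmonic.coeff_natDegree, mul_one]

theorem X_add_Y_ne_zero (i j : ℕ) : X i + Y j ≠ 0 := by
  rw [X, Y, ← map_add]
  intro h
  have h0 : (MvPolynomial.X (Sum.inl i) + MvPolynomial.X (Sum.inr j) : MvPolynomial (ℕ ⊕ ℕ) ℚ)
      = 0 :=
    IsFractionRing.injective (MvPolynomial (ℕ ⊕ ℕ) ℚ) K (by simpa using h)
  have h1 := congrArg (MvPolynomial.eval fun _ => (1 : ℚ)) h0
  norm_num at h1

theorem Y_ne_Y {l j : ℕ} (h : l ≠ j) : Y l ≠ Y j := by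
  rw [Y, Y]
  intro he
  have h0 : (MvPolynomial.X (Sum.inr l) : MvPolynomial (ℕ ⊕ ℕ) ℚ) = MvPolynomial.X (Sum.inr j) :=
    IsFractionRing.injective (MvPolynomial (ℕ ⊕ ℕ) ℚ) K he
  have h1 := congrArg (MvPolynomial.eval fun v => if v = Sum.inr l then (1:ℚ) else 0) h0
  have h2 : Sum.inr (β := ℕ) l ≠ (Sum.inr j : ℕ ⊕ ℕ) := by simp [h]
  rw [MvPolynomial.eval_X, MvPolynomial.eval_X, if_pos rfl, if_neg (by simpa using h2.symm)] at h1
  norm_num at h1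

theorem negY_injOn (k : ℕ) : Set.InjOn (fun j => -Y j) (Finset.Icc 1 k) := by
  intro a _ b _ hab
  by_contra hne
  exact Y_ne_Y hne (neg_injective hab)

/-- the Lagrange weight -/
def W (k j : ℕ) : K := ∏ l ∈ (Finset.Icc 1 k).erase j, (Y l - Y j)⁻¹

/-- the explicit sum. -/
def S (m s k : ℕ) : K := ∑ j ∈ Finset.Icc 1 k, (∏ i ∈ Finset.Icc s m, (X i + Y j)⁻¹) * W k j

/-- for f of degree < k, coeff (k-1) = ∑ f(-y_j) W k j -/
theorem coeff_eq_sum_W (k : ℕ) (hk : 1 ≤ k) (f : Polynomial K) (hf : f.degree < (k : ℕ)) :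
    f.coeff (k - 1) = ∑ j ∈ Finset.Icc 1 k, f.eval (-Y j) * W k j := by
  have hcard : #(Finset.Icc 1 k) = k := by rw [Nat.card_Icc]; omega
  have := lagrange_coeff (Finset.Icc 1 k) (fun j => -Y j) (negY_injOn k) f (by rw [hcard]; exact hf)
  rw [hcard] at this
  rw [this]
  refine Finset.sum_congr rfl fun j hj => ?_
  rw [W]
  congr 1
  refine Finset.prod_congr rfl fun l hl => ?_
  rw [neg_sub_neg]

theorem sum_W_eq_zero {k : ℕ} (hk : 2 ≤ k) : ∑ j ∈ Finset.Icc 1 k, W k j = 0 := by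
  have h := coeff_eq_sum_W k (by omega) 1 (by
    rw [Polynomial.degree_one]
    exact_mod_cast WithBot.coe_lt_coe.mpr (by omega : 0 < k))
  rw [Polynomial.coeff_one, if_neg (by omega : ¬(k - 1 = 0))] at h
  rw [h]
  refine Finset.sum_congr rfl fun j _ => ?_
  rw [Polynomial.eval_one, one_mul]

theorem Icc_eq_insert_left {s m : ℕ} (hsm : s ≤ m) :
    Finset.Icc s m = insert s (Finset.Icc (s + 1) m) := by
  ext x; simp only [Finset.mem_Icc, Finset.mem_insert]; omega

theorem prod_Icc_split {s m j : ℕ} (hsm : s ≤ m) :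
    (∏ i ∈ Finset.Icc s m, (X i + Y j)⁻¹)
      = (X s + Y j)⁻¹ * ∏ i ∈ Finset.Icc (s + 1) m, (X i + Y j)⁻¹ := by
  rw [Icc_eq_insert_left hsm, Finset.prod_insert (by simp)]

theorem S_rec {m s k : ℕ} (hsm : s ≤ m) (hk : 1 ≤ k) :
    (X s + Y k) * S m s k = S m (s + 1) k + S m s (k - 1) := by
  obtain ⟨k', rfl⟩ : ∃ k', k = k' + 1 := ⟨k - 1, by omega⟩
  have hterm : ∀ j ∈ Finset.Icc 1 (k' + 1),
      (X s + Y (k' + 1)) * ((∏ i ∈ Finset.Icc s m, (X i + Y j)⁻¹) * W (k' + 1) j)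
        = (∏ i ∈ Finset.Icc (s + 1) m, (X i + Y j)⁻¹) * W (k' + 1) j
          + (∏ i ∈ Finset.Icc s m, (X i + Y j)⁻¹) * ((Y (k' + 1) - Y j) * W (k' + 1) j) := by
    intro j _
    have hXY : X s + Y (k' + 1) = (X s + Y j) + (Y (k' + 1) - Y j) := by ring
    have hcancel : (X s + Y j) * ∏ i ∈ Finset.Icc s m, (X i + Y j)⁻¹
        = ∏ i ∈ Finset.Icc (s + 1) m, (X i + Y j)⁻¹ := by
      rw [prod_Icc_split hsm, ← mul_assoc, mul_inv_cancel₀ (X_add_Y_ne_zero s j), one_mul]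
    calc (X s + Y (k' + 1)) * ((∏ i ∈ Finset.Icc s m, (X i + Y j)⁻¹) * W (k' + 1) j)
        = ((X s + Y j) * ∏ i ∈ Finset.Icc s m, (X i + Y j)⁻¹) * W (k' + 1) j
          + (∏ i ∈ Finset.Icc s m, (X i + Y j)⁻¹) * ((Y (k' + 1) - Y j) * W (k' + 1) j) := by
          ring
      _ = _ := by rw [hcancel]
  rw [S, Finset.mul_sum, Finset.sum_congr rfl hterm, Finset.sum_add_distrib]
  congr 1
  -- second sum equals S m s k'
  have hzero : (Y (k' + 1) - Y (k' + 1)) * W (k' + 1) (k' + 1) = 0 := by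
    rw [sub_self, zero_mul]
  rw [Finset.sum_Icc_succ_top (by omega : 1 ≤ k' + 1), hzero, mul_zero, add_zero]
  rw [S]
  have hk1 : (k' + 1) - 1 = k' := by omega
  rw [hk1]
  refine Finset.sum_congr rfl fun j hj => ?_
  congr 1
  -- (Y (k'+1) - Y j) * W (k'+1) j = W k' j  for j ∈ Icc 1 k'
  rw [Finset.mem_Icc] at hj
  have hsplit : (Finset.Icc 1 (k' + 1)).erase j = insert (k' + 1) ((Finset.Icc 1 k').erase j) := by
    ext x
    simp only [Finset.mem_erase, Finset.mem_Icc, Finset.mem_insert]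
    omega
  rw [W, hsplit, Finset.prod_insert (by simp only [Finset.mem_erase, Finset.mem_Icc]; omega),
    ← mul_assoc, mul_inv_cancel₀ (sub_ne_zero_of_ne (Y_ne_Y (by omega))), one_mul, W]

theorem S_eq_F1 (m n : ℕ) : ∀ (N s k : ℕ), 1 ≤ s → s ≤ m → 1 ≤ k → k ≤ n →
    (m - s) + k ≤ N → S m s k = F1 m n X Y (m, 1) (s, k) := by
  intro N
  induction N with
  | zero => intro s k _ _ hk _ hN; omega
  | succ N ih =>
    intro s k hs hsm hk hkn hN
    by_cases hbase : s = m ∧ k = 1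
    · obtain ⟨rfl, rfl⟩ := hbase
      rw [F1_self s n X Y (s, 1) ⟨hs, le_refl s, le_refl 1, hkn⟩]
      rw [S]
      simp [W, Finset.Icc_self]
    · have hne : ((s, k) : ℕ × ℕ) ≠ (m, 1) := by
        intro h
        rw [Prod.mk.injEq] at h
        exact hbase ⟨h.1, h.2⟩
      have hXYne := X_add_Y_ne_zero s k
      have hrec := S_rec hsm hk
      have hF := F1_rec m n X Y (m, 1) (s, k) hne ⟨hs, hsm, hk, hkn⟩
      have h1 : S m (s + 1) k = F1 m n X Y (m, 1) (s + 1, k) := by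
        by_cases hsm' : s + 1 ≤ m
        · exact ih (s + 1) k (by omega) hsm' hk hkn (by omega)
        · have hsm2 : s = m := by omega
          subst hsm2
          have hk2 : 2 ≤ k := by
            rcases Nat.lt_or_ge k 2 with h | h
            · exact absurd ⟨rfl, by omega⟩ hbase
            · exact h
          rw [F1_empty s n X Y (s, 1) (s + 1, k) (by simp)]
          rw [S]
          have hIccEmpty : Finset.Icc (s + 1) s = ∅ := Finset.Icc_eq_empty (by omega)
          have : ∀ j ∈ Finset.Icc 1 k, (∏ i ∈ Finset.Icc (s + 1) s, (X i + Y j)⁻¹) * W k j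
              = W k j := by
            intro j _
            rw [hIccEmpty, Finset.prod_empty, one_mul]
          rw [Finset.sum_congr rfl this]
          exact sum_W_eq_zero hk2
      have h2 : S m s (k - 1) = F1 m n X Y (m, 1) (s, k - 1) := by
        by_cases hk1 : k = 1
        · subst hk1
          rw [F1_empty m n X Y (m, 1) (s, 0) (by simp)]
          rw [S]
          simp
        · exact ih s (k - 1) hs hsm (by omega) (by omega) (by omega)
      calc S m s k = (X s + Y k)⁻¹ * ((X s + Y k) * S m s k) := by
            rw [inv_mul_cancel_left₀ hXYne]
        _ = (X s + Y k)⁻¹ * (S m (s + 1) k + S m s (k - 1)) := by rw [hrec]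
        _ = (X s + Y k)⁻¹ * (F1 m n X Y (m, 1) (s + 1, k) + F1 m n X Y (m, 1) (s, k - 1)) := by
            rw [h1, h2]
        _ = F1 m n X Y (m, 1) (s, k) := hF.symm


/-- With `P_k(t) = (t+y_1)⋯(t+y_k)`, if `Q` is the polynomial of degree `< k` congruent to
`∏_{j=s}^m 1/(x_j − t)` modulo `P_k(t)` (expressed by saying that
`Q·∏_{j=s}^m (x_j − t) − 1` is divisible by `P_k(t)`), then the coefficient of `t^{k−1}`
in `Q` equals `F_{s,k}`, the weighted sum over Up-Right lattice paths from `(m,1)` to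
`(s,k)` in the grid `{1,…,m} × {1,…,n}`. -/
theorem stmt10 (m n s k : ℕ) (hs : 1 ≤ s) (hsm : s ≤ m) (hk : 1 ≤ k) (hkn : k ≤ n)
    (Q : Polynomial K) (hdeg : Q.degree < (k : ℕ))
    (hQ : (∏ j ∈ Finset.Icc 1 k, (Polynomial.X + Polynomial.C (Y j))) ∣
        Q * (∏ j ∈ Finset.Icc s m, (Polynomial.C (X j) - Polynomial.X)) - 1) :
    Q.coeff (k - 1) = F1 m n X Y (m, 1) (s, k) := by
  have heval : ∀ j ∈ Finset.Icc 1 k, Q.eval (-Y j) = ∏ i ∈ Finset.Icc s m, (X i + Y j)⁻¹ := by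
    intro j hj
    obtain ⟨R, hR⟩ := hQ
    have hev := congrArg (Polynomial.eval (-Y j)) hR
    rw [Polynomial.eval_mul, Polynomial.eval_prod,
      Finset.prod_eq_zero hj (by simp), zero_mul, Polynomial.eval_sub, Polynomial.eval_mul,
      Polynomial.eval_prod, Polynomial.eval_one] at hev
    have hprod : ∀ i ∈ Finset.Icc s m,
        Polynomial.eval (-Y j) (Polynomial.C (X i) - Polynomial.X) = X i + Y j := by
      intro i _
      simp [sub_neg_eq_add]
    rw [Finset.prod_congr rfl hprod] at hev
    have hmul : Q.eval (-Y j) * ∏ i ∈ Finset.Icc s m, (X i + Y j) = 1 :=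
      (sub_eq_zero.mp hev)
    rw [eq_inv_of_mul_eq_one_left hmul, Finset.prod_inv_distrib]
  rw [coeff_eq_sum_W k hk Q hdeg, Finset.sum_congr rfl fun j hj => by rw [heval j hj]]
  exact S_eq_F1 m n (m + k) s k hs hsm hk hkn (by omega)
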